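/- Let G be a graph with a tree-depth decomposition, u a vertex, and φ: tail(u) → {A, F, T}. Let N(u,φ,i) be the number of i-element subsets X ⊆ tree[u] such that X ∪ φ^{-1}(T) dominates tree[u] and dominates no vertex of φ^{-1}(F). Then N(u,φ,i) = N'(u, φ[u→A], i) − N'(u, φ[u→F], i) + N'(u, φ[u→T], i−1), where N'(u,ψ,i) counts i-element subsets X ⊆ tree(u) such that X ∪ ψ^{-1}(T) dominates tree(u) and no vertex of ψ^{-1}(F). -/
import Mathlib


/-- A tree-depth decomposition of `G`: identifying (via the bijection μ) the nodes of the
rooted forest with the vertices, it is given by the ancestor-or-equal relation `le`,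
a partial order in which the ancestors of any element form a chain, and such that the
endpoints of every edge of `G` are comparable. -/
structure TreeDepthDecomp {V : Type} (G : SimpleGraph V) where
  le : V → V → Prop
  le_refl : ∀ a, le a a
  le_trans : ∀ {a b c}, le a b → le b c → le a c
  le_antisymm : ∀ {a b}, le a b → le b a → a = b
  ancestors_chain : ∀ {a b c}, le a c → le b c → le a b ∨ le b a
  adj_comparable : ∀ {u w}, G.Adj u w → le u w ∨ le w u

/-- The decomposition has depth at most `d`: every chain (in particular every
root-to-leaf path) has at most `d` nodes. -/
def TreeDepthDecomp.DepthLE {V : Type} {G : SimpleGraph V}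
    (D : TreeDepthDecomp G) (d : ℕ) : Prop :=
  ∀ s : Finset V, (∀ a ∈ s, ∀ b ∈ s, D.le a b ∨ D.le b a) → s.card ≤ d
/-- `v` is a child of `u` in the decomposition's forest: `u` is a strict ancestor of `v`
and no node lies strictly between them. -/
def TreeDepthDecomp.IsChild {V : Type} {G : SimpleGraph V} (D : TreeDepthDecomp G)
    (u v : V) : Prop :=
  D.le u v ∧ u ≠ v ∧ ∀ w, D.le u w → D.le w v → w = u ∨ w = v

/-- `tree[u]`: the set of vertices in the subtree rooted at `u` (including `u`). -/
def TreeDepthDecomp.subtree {V : Type} {G : SimpleGraph V} (D : TreeDepthDecomp G)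
    (u : V) : Set V := {w | D.le u w}

/-- `tail(u)`: the set of strict ancestors of `u`. -/
def TreeDepthDecomp.tail {V : Type} {G : SimpleGraph V} (D : TreeDepthDecomp G)
    (u : V) : Set V := {w | D.le w u ∧ w ≠ u}

/-- `tail[u]`: the set of ancestors of `u`, including `u` itself. -/
def TreeDepthDecomp.tailc {V : Type} {G : SimpleGraph V} (D : TreeDepthDecomp G)
    (u : V) : Set V := {w | D.le w u}
/-- The three marks: Allowed, Forbidden, Taken. -/
inductive Mark : Type | A | F | T
deriving DecidableEq

/-- `S` dominates the vertex `w`: `w ∈ S` or `w` has a neighbor in `S`. -/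
def Dominates {V : Type} (G : SimpleGraph V) (S : Set V) (w : V) : Prop :=
  w ∈ S ∨ ∃ x ∈ S, G.Adj x w

/-- The Taken vertices of `tail[u]` under `φ`. -/
def TakenSet {V : Type} {G : SimpleGraph V} (D : TreeDepthDecomp G)
    (u : V) (φ : V → Mark) : Set V := {w | w ∈ D.tailc u ∧ φ w = Mark.T}

/-- `N(u, φ, i)`: the number of `i`-element subsets `X ⊆ tree[u]` such that
`X ∪ φ⁻¹(T)` dominates `tree[u]` and dominates no vertex of `φ⁻¹(F)` (with `φ` read on
`tail(u)`). -/
noncomputable def Ncnt {V : Type} (G : SimpleGraph V) (D : TreeDepthDecomp G)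
    (u : V) (φ : V → Mark) (i : ℕ) : ℕ :=
  Nat.card {X : Finset V // (↑X : Set V) ⊆ D.subtree u ∧ X.card = i ∧
    (∀ w ∈ D.subtree u,
      Dominates G ((↑X : Set V) ∪ {w' | w' ∈ D.tail u ∧ φ w' = Mark.T}) w) ∧
    (∀ w ∈ D.tail u, φ w = Mark.F →
      ¬ Dominates G ((↑X : Set V) ∪ {w' | w' ∈ D.tail u ∧ φ w' = Mark.T}) w)}

/-- `N'(u, ψ, i)`: the number of `i`-element subsets `X ⊆ tree(u)` such that
`X ∪ ψ⁻¹(T)` dominates `tree(u)` and dominates no vertex of `ψ⁻¹(F)` (with `ψ` read on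
`tail[u]`). -/
noncomputable def N'cnt {V : Type} (G : SimpleGraph V) (D : TreeDepthDecomp G)
    (u : V) (ψ : V → Mark) (i : ℕ) : ℕ :=
  Nat.card {X : Finset V // (↑X : Set V) ⊆ D.subtree u \ {u} ∧ X.card = i ∧
    (∀ w ∈ D.subtree u \ {u}, Dominates G ((↑X : Set V) ∪ TakenSet D u ψ) w) ∧
    (∀ w ∈ D.tailc u, ψ w = Mark.F →
      ¬ Dominates G ((↑X : Set V) ∪ TakenSet D u ψ) w)}

private lemma card_split_aux {α : Type} [Finite α] (p q : α → Prop) :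
    Nat.card {x // p x} = Nat.card {x // p x ∧ q x} + Nat.card {x // p x ∧ ¬ q x} := by
  classical
  rw [← Nat.card_sum]
  apply Nat.card_congr
  exact
    { toFun := fun x => if h : q x.1 then Sum.inl ⟨x.1, x.2, h⟩ else Sum.inr ⟨x.1, x.2, h⟩
      invFun := Sum.elim (fun y => ⟨y.1, y.2.1⟩) (fun y => ⟨y.1, y.2.1⟩)
      left_inv := by intro x; by_cases h : q x.1 <;> simp [h]
      right_inv := by rintro (y | y) <;> simp [y.2.2] }

/-- the inclusion–exclusion recursion for counting dominating sets along a
tree-depth decomposition: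
`N(u,φ,i) = N'(u,φ[u→A],i) − N'(u,φ[u→F],i) + N'(u,φ[u→T],i−1)`,
with the convention `N'(·,·,−1) = 0`. -/
theorem domination_count_recursion {V : Type} [Fintype V] [DecidableEq V]
    (G : SimpleGraph V) (D : TreeDepthDecomp G) (u : V) (φ : V → Mark) (i : ℕ) :
    (Ncnt G D u φ i : ℤ) =
      (N'cnt G D u (Function.update φ u Mark.A) i : ℤ)
      - (N'cnt G D u (Function.update φ u Mark.F) i : ℤ)
      + (if i = 0 then 0 else (N'cnt G D u (Function.update φ u Mark.T) (i - 1) : ℤ)) := by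
  classical
  -- notation
  set T0 : Set V := {w' | w' ∈ D.tail u ∧ φ w' = Mark.T} with hT0def
  have hle : D.le u u := D.le_refl u
  have huS : u ∈ D.subtree u := hle
  have hutail : u ∉ D.tail u := fun h => h.2 rfl
  -- computation of the taken sets
  have hTA : ∀ m : Mark, m ≠ Mark.T → TakenSet D u (Function.update φ u m) = T0 := by
    intro m hm
    ext w
    simp only [TakenSet, TreeDepthDecomp.tailc, TreeDepthDecomp.tail, hT0def,
      Set.mem_setOf_eq, Function.update_apply]
    by_cases h : w = u
    · subst h; simp [hle, hm]
    · simp [h]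
  have hTT : TakenSet D u (Function.update φ u Mark.T) = insert u T0 := by
    ext w
    simp only [TakenSet, TreeDepthDecomp.tailc, TreeDepthDecomp.tail, hT0def,
      Set.mem_setOf_eq, Function.update_apply, Set.mem_insert_iff]
    by_cases h : w = u
    · subst h; simp [hle]
    · simp [h]
  -- tailc membership
  have htailc : ∀ w, w ∈ D.tailc u ↔ w = u ∨ w ∈ D.tail u := by
    intro w
    simp only [TreeDepthDecomp.tailc, TreeDepthDecomp.tail, Set.mem_setOf_eq]
    constructor
    · intro h; by_cases hw : w = u
      · exact Or.inl hw
      · exact Or.inr ⟨h, hw⟩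
    · rintro (rfl | h)
      · exact hle
      · exact h.1
  -- normalized predicates
  set PA : Finset V → Prop := fun X => (↑X : Set V) ⊆ D.subtree u \ {u} ∧ X.card = i ∧
    (∀ w ∈ D.subtree u \ {u}, Dominates G ((↑X : Set V) ∪ T0) w) ∧
    (∀ w ∈ D.tail u, φ w = Mark.F → ¬ Dominates G ((↑X : Set V) ∪ T0) w) with hPAdef
  set PT : Finset V → Prop := fun Y => (↑Y : Set V) ⊆ D.subtree u \ {u} ∧ Y.card = i - 1 ∧
    (∀ w ∈ D.subtree u \ {u}, Dominates G ((↑Y : Set V) ∪ insert u T0) w) ∧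
    (∀ w ∈ D.tail u, φ w = Mark.F → ¬ Dominates G ((↑Y : Set V) ∪ insert u T0) w) with hPTdef
  set PN : Finset V → Prop := fun X => (↑X : Set V) ⊆ D.subtree u ∧ X.card = i ∧
    (∀ w ∈ D.subtree u, Dominates G ((↑X : Set V) ∪ T0) w) ∧
    (∀ w ∈ D.tail u, φ w = Mark.F → ¬ Dominates G ((↑X : Set V) ∪ T0) w) with hPNdef
  -- identification of the four counts
  have hN : Ncnt G D u φ i = Nat.card {X : Finset V // PN X} := rfl
  have hA : N'cnt G D u (Function.update φ u Mark.A) i = Nat.card {X : Finset V // PA X} := by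
    apply Nat.card_congr
    apply Equiv.subtypeEquivRight
    intro X
    rw [hTA Mark.A (by simp)]
    refine and_congr_right fun _ => and_congr_right fun _ => and_congr_right fun _ => ?_
    constructor
    · intro h w hw hF
      refine h w ((htailc w).2 (Or.inr hw)) ?_
      rw [Function.update_apply, if_neg hw.2, hF]
    · intro h w hw hF
      rcases (htailc w).1 hw with rfl | hw'
      · rw [Function.update_self] at hF; exact absurd hF (by simp)
      · refine h w hw' ?_
        rwa [Function.update_apply, if_neg hw'.2] at hF
  have hF : N'cnt G D u (Function.update φ u Mark.F) i =
      Nat.card {X : Finset V // PA X ∧ ¬ Dominates G ((↑X : Set V) ∪ T0) u} := by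
    apply Nat.card_congr
    apply Equiv.subtypeEquivRight
    intro X
    rw [hTA Mark.F (by simp)]
    constructor
    · rintro ⟨h1, h2, h3, h4⟩
      refine ⟨⟨h1, h2, h3, ?_⟩, ?_⟩
      · intro w hw hFw
        refine h4 w ((htailc w).2 (Or.inr hw)) ?_
        rw [Function.update_apply, if_neg hw.2, hFw]
      · exact h4 u ((htailc u).2 (Or.inl rfl)) (Function.update_self _ _ _)
    · rintro ⟨⟨h1, h2, h3, h4⟩, h5⟩
      refine ⟨h1, h2, h3, ?_⟩
      intro w hw hFw
      rcases (htailc w).1 hw with rfl | hw'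
      · exact h5
      · refine h4 w hw' ?_
        rwa [Function.update_apply, if_neg hw'.2] at hFw
  have hT : N'cnt G D u (Function.update φ u Mark.T) (i - 1) =
      Nat.card {Y : Finset V // PT Y} := by
    apply Nat.card_congr
    apply Equiv.subtypeEquivRight
    intro Y
    rw [hTT]
    refine and_congr_right fun _ => and_congr_right fun _ => and_congr_right fun _ => ?_
    constructor
    · intro h w hw hF
      refine h w ((htailc w).2 (Or.inr hw)) ?_
      rw [Function.update_apply, if_neg hw.2, hF]
    · intro h w hw hF
      rcases (htailc w).1 hw with rfl | hw'
      · rw [Function.update_self] at hF; exact absurd hF (by simp)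
      · refine h w hw' ?_
        rwa [Function.update_apply, if_neg hw'.2] at hF
  -- splits
  have splitA : Nat.card {X : Finset V // PA X} =
      Nat.card {X : Finset V // PA X ∧ Dominates G ((↑X : Set V) ∪ T0) u} +
      Nat.card {X : Finset V // PA X ∧ ¬ Dominates G ((↑X : Set V) ∪ T0) u} :=
    card_split_aux _ _
  have splitN : Nat.card {X : Finset V // PN X} =
      Nat.card {X : Finset V // PN X ∧ u ∉ X} +
      Nat.card {X : Finset V // PN X ∧ ¬ u ∉ X} :=
    card_split_aux _ _
  -- B = A1
  have hB : Nat.card {X : Finset V // PN X ∧ u ∉ X} =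
      Nat.card {X : Finset V // PA X ∧ Dominates G ((↑X : Set V) ∪ T0) u} := by
    apply Nat.card_congr
    apply Equiv.subtypeEquivRight
    intro X
    rw [hPNdef, hPAdef]
    constructor
    · rintro ⟨⟨h1, h2, h3, h4⟩, h5⟩
      refine ⟨⟨?_, h2, fun w hw => h3 w hw.1, h4⟩, h3 u huS⟩
      intro w hw
      exact ⟨h1 hw, fun hwu => h5 (by rwa [← hwu])⟩
    · rintro ⟨⟨h1, h2, h3, h4⟩, h5⟩
      have hXu : u ∉ X := fun hu => (h1 (Finset.mem_coe.2 hu)).2 rfl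
      refine ⟨⟨fun w hw => (h1 hw).1, h2, ?_, h4⟩, hXu⟩
      intro w hw
      by_cases hwu : w = u
      · subst hwu; exact h5
      · exact h3 w ⟨hw, hwu⟩
  -- C = T-count (or 0)
  have hC : Nat.card {X : Finset V // PN X ∧ ¬ u ∉ X} =
      if i = 0 then 0 else Nat.card {Y : Finset V // PT Y} := by
    split_ifs with hi
    · subst hi
      rw [Nat.card_eq_zero]
      left
      constructor
      rintro ⟨X, ⟨_, h2, _, _⟩, h5⟩
      rw [Finset.card_eq_zero] at h2
      subst h2
      exact h5 (Finset.notMem_empty u)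
    · apply Nat.card_congr
      refine
        { toFun := fun X => ⟨X.1.erase u, ?_⟩
          invFun := fun Y => ⟨insert u Y.1, ?_⟩
          left_inv := ?_
          right_inv := ?_ }
      · obtain ⟨⟨h1, h2, h3, h4⟩, h5⟩ := X.2
        rw [not_not] at h5
        have hset : (↑X.1 : Set V) ∪ T0 = (↑(X.1.erase u) : Set V) ∪ insert u T0 := by
          rw [Finset.coe_erase]
          ext w
          by_cases hwu : w = u
          · subst hwu; simp [h5]
          · simp [hwu]
        refine ⟨?_, ?_, ?_, ?_⟩
        · rw [Finset.coe_erase]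
          intro w hw
          exact ⟨h1 hw.1, hw.2⟩
        · rw [Finset.card_erase_of_mem h5, h2]
        · intro w hw
          rw [← hset]
          exact h3 w hw.1
        · intro w hw hFw
          rw [← hset]
          exact h4 w hw hFw
      · obtain ⟨h1, h2, h3, h4⟩ := Y.2
        have hYu : u ∉ Y.1 := fun hu => (h1 (Finset.mem_coe.2 hu)).2 rfl
        have hset : (↑(insert u Y.1) : Set V) ∪ T0 = (↑Y.1 : Set V) ∪ insert u T0 := by
          rw [Finset.coe_insert]
          ext w
          by_cases hwu : w = u
          · subst hwu; simp
          · simp [hwu]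
        refine ⟨⟨?_, ?_, ?_, ?_⟩, by simp⟩
        · rw [Finset.coe_insert]
          rintro w (rfl | hw)
          · exact huS
          · exact (h1 hw).1
        · rw [Finset.card_insert_of_notMem hYu, h2]
          omega
        · intro w hw
          rw [hset]
          by_cases hwu : w = u
          · subst hwu; exact Or.inl (Or.inr (Set.mem_insert _ _))
          · exact h3 w ⟨hw, hwu⟩
        · intro w hw hFw
          rw [hset]
          exact h4 w hw hFw
      · rintro ⟨X, ⟨_, _, _, _⟩, h5⟩
        rw [not_not] at h5
        simp [Finset.insert_erase h5]
      · rintro ⟨Y, h1, _, _, _⟩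
        have hYu : u ∉ Y := fun hu => (h1 (Finset.mem_coe.2 hu)).2 rfl
        simp [Finset.erase_insert hYu]
  -- conclude
  rw [hN, hA, hF, hT, splitA, splitN, hB, hC]
  split_ifs with hi <;> push_cast <;> ring
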